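/- Let T be a Set-functor and Λ a set of monotone fuzzy predicate liftings for T that is closed under duals. Then for every pseudometric d : A × A → [0,1], K_Λ d = d^{↑T}, where d^{↑T}(t₁,t₂) = sup { |λ_A(f₁,…,fₙ)(t₁) − λ_A(f₁,…,fₙ)(t₂)| : λ ∈ Λ n-ary, each fᵢ : A → [0,1] nonexpansive from (A,d) to ([0,1], Euclidean distance) }. -/

import Mathlib

open unitInterval

noncomputable section

instance : Fact ((0:ℝ) ≤ 1) := ⟨zero_le_one⟩

/-- A fuzzy relation between `A` and `B` is a map `A × B → [0,1]`. -/
abbrev FRel (A B : Type) : Type := A → B → I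

/-- Clamp a real number into the unit interval. -/
def clamp (x : ℝ) : I := Set.projIcc 0 1 zero_le_one x

/-- Composition of fuzzy relations: `(R;S)(a,c) = inf_b min(R(a,b) + S(b,c), 1)`. -/
def fcomp {A B C : Type} (R : FRel A B) (S : FRel B C) : FRel A C :=
  fun a c => ⨅ b : B, clamp ((R a b : ℝ) + (S b c : ℝ))

/-- Converse of a fuzzy relation. -/
def fconv {A B : Type} (R : FRel A B) : FRel B A := fun b a => R a b

open scoped Classical in
/-- The `ε`-graph of a function. -/
def fgraphE {A B : Type} (ε : I) (f : A → B) : FRel A B :=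
  fun a b => if f a = b then ε else 1

/-- The graph of a function. -/
def fgraph {A B : Type} (f : A → B) : FRel A B := fgraphE 0 f

/-- The `ε`-diagonal. -/
def fdiagE (ε : I) (A : Type) : FRel A A := fgraphE ε (id : A → A)

/-- The diagonal. -/
def fdiag (A : Type) : FRel A A := fgraph (id : A → A)

/-- A Set-functor. -/
structure SetFunctor where
  obj : Type → Type
  map : {A B : Type} → (A → B) → obj A → obj B
  map_id : ∀ (A : Type), map (id : A → A) = id
  map_comp : ∀ {A B C : Type} (f : A → B) (g : B → C), map (g ∘ f) = map g ∘ map f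

/-- A fuzzy lax extension of a Set-functor. -/
structure LaxExt (T : SetFunctor) where
  lift : {A B : Type} → FRel A B → FRel (T.obj A) (T.obj B)
  mono : ∀ {A B : Type} (R S : FRel A B), R ≤ S → lift R ≤ lift S
  lax_comp : ∀ {A B C : Type} (R : FRel A B) (S : FRel B C),
    lift (fcomp R S) ≤ fcomp (lift R) (lift S)
  lax_graph : ∀ {A B : Type} (f : A → B), lift (fgraph f) ≤ fgraph (T.map f)
  lax_graph_conv : ∀ {A B : Type} (f : A → B),
    lift (fconv (fgraph f)) ≤ fconv (fgraph (T.map f))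

end

/-- A pair `(f,g)` is `R`-nonexpansive if `f(a) − g(b) ≤ R(a,b)` for all `a, b`. -/
def RNonexp {A B : Type} (R : FRel A B) (f : A → I) (g : B → I) : Prop :=
  ∀ a b, (f a : ℝ) - (g b : ℝ) ≤ (R a b : ℝ)

/-- The nonexpansive companion `R[f](b) = sup_a max(f(a) − R(a,b), 0)`. -/
noncomputable def companion {A B : Type} (R : FRel A B) (f : A → I) : B → I :=
  fun b => ⨆ a : A, clamp ((f a : ℝ) - (R a b : ℝ))

/-- An `n`-ary fuzzy predicate lifting for `T`: a natural transformation `Q^n ⇒ Q ∘ T`,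
where `QX = (X → [0,1])` is the contravariant fuzzy powerset functor. -/
structure PredLift (T : SetFunctor) (n : ℕ) where
  app : (X : Type) → (Fin n → (X → I)) → T.obj X → I
  natural : ∀ {X Y : Type} (f : X → Y) (g : Fin n → (Y → I)) (t : T.obj X),
    app X (fun i => (g i) ∘ f) t = app Y g (T.map f t)

/-- A predicate lifting is monotone if it preserves the pointwise order in each argument. -/
def PredLiftMonotone (T : SetFunctor) {n : ℕ} (l : PredLift T n) : Prop :=
  ∀ (X : Type) (f g : Fin n → (X → I)), (∀ i, f i ≤ g i) → ∀ t, l.app X f t ≤ l.app X g t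

/-- A predicate lifting is nonexpansive if the sup-norm of `λ(f) − λ(g)` is bounded by the
maximum over `i` of the sup-norm of `fᵢ − gᵢ`. -/
def PredLiftNonexp (T : SetFunctor) {n : ℕ} (l : PredLift T n) : Prop :=
  ∀ (X : Type) (f g : Fin n → (X → I)) (t : T.obj X),
    |(l.app X f t : ℝ) - (l.app X g t : ℝ)| ≤
      ⨆ p : Fin n × X, |(f p.1 p.2 : ℝ) - (g p.1 p.2 : ℝ)|

/-- The dual predicate lifting `λ̄(f₁,…,fₙ) = 1 − λ(1−f₁,…,1−fₙ)`. -/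
def PredLift.dual {T : SetFunctor} {n : ℕ} (l : PredLift T n) : PredLift T n where
  app X f t := unitInterval.symm (l.app X (fun i x => unitInterval.symm (f i x)) t)
  natural := by
    intro X Y f g t
    exact congrArg unitInterval.symm
      (l.natural f (fun i y => unitInterval.symm (g i y)) t)

/-- The Kantorovich lifting induced by a set `Λ` of predicate liftings. -/
noncomputable def kantorovich (T : SetFunctor) (Λ : Set (Σ n, PredLift T n))
    {A B : Type} (R : FRel A B) : FRel (T.obj A) (T.obj B) :=
  fun t₁ t₂ => ⨆ l : Λ,
    ⨆ fg : {fg : (Fin l.1.1 → (A → I)) × (Fin l.1.1 → (B → I)) //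
        ∀ i, RNonexp R (fg.1 i) (fg.2 i)},
      clamp ((l.1.2.app A fg.1.1 t₁ : ℝ) - (l.1.2.app B fg.1.2 t₂ : ℝ))

/-- `d` is a pseudometric on `X`. -/
def IsPseudometric {X : Type} (d : FRel X X) : Prop :=
  ((∀ x, d x x = 0) ∧ ∀ x y z, (d x z : ℝ) ≤ (d x y : ℝ) + (d y z : ℝ)) ∧
    ∀ x y, d x y = d y x

section Aux


lemma KL.coe_clamp (x : ℝ) : (clamp x : ℝ) = max 0 (min 1 x) := rfl

lemma KL.clamp_coe (x : I) : clamp (x : ℝ) = x := Set.projIcc_val zero_le_one x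

lemma KL.clamp_mono : Monotone clamp := Set.monotone_projIcc zero_le_one

lemma KL.le_clamp {x : ℝ} (h : x ≤ 1) : x ≤ (clamp x : ℝ) := by
  rw [KL.coe_clamp]
  rcases le_total x 0 with h0 | h0
  · exact h0.trans (le_max_left _ _)
  · rw [min_eq_right h]; exact le_max_right _ _

lemma KL.clamp_add_le {x y c : ℝ} (hc : 0 ≤ c) (h : x ≤ c + y) :
    (clamp x : ℝ) ≤ c + (clamp y : ℝ) := by
  rw [KL.coe_clamp, KL.coe_clamp]
  apply max_le
  · exact add_nonneg hc (le_max_left _ _)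
  · have h1 : min 1 x ≤ c + min 1 y := by
      rcases le_total y 1 with hy | hy
      · rw [min_eq_right hy]; exact (min_le_right _ _).trans h
      · rw [min_eq_left hy]
        exact (min_le_left _ _).trans (by linarith)
    exact h1.trans (by gcongr; exact le_max_right _ _)

lemma KL.bddI {ι : Sort*} (u : ι → I) : BddAbove (Set.range fun i => (u i : ℝ)) :=
  ⟨1, by rintro x ⟨i, rfl⟩; exact (u i).2.2⟩

lemma KL.abs_sub_le_one (x y : I) : |(x : ℝ) - (y : ℝ)| ≤ 1 := by
  rw [abs_sub_le_iff]
  constructor <;> [skip; skip] <;>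
    · have := x.2.1; have := x.2.2; have := y.2.1; have := y.2.2; linarith

end Aux

section CompanionLemmas

open unitInterval

lemma KL.companion_ge {A : Type} (d : FRel A A) (hrefl : ∀ a, d a a = 0)
    (f : A → I) (a : A) : f a ≤ companion d f a := by
  have h : clamp ((f a : ℝ) - (d a a : ℝ)) = f a := by
    rw [hrefl]; norm_num [KL.clamp_coe]
  calc f a = clamp ((f a : ℝ) - (d a a : ℝ)) := h.symm
    _ ≤ companion d f a := le_iSup (fun a' => clamp ((f a' : ℝ) - (d a' a : ℝ))) a

lemma KL.companion_le {A : Type} (d : FRel A A) (f g : A → I)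
    (h : RNonexp d f g) : companion d f ≤ g := by
  intro b
  refine iSup_le fun a => ?_
  calc clamp ((f a : ℝ) - (d a b : ℝ)) ≤ clamp ((g b : ℝ)) :=
        KL.clamp_mono (by have := h a b; linarith)
    _ = g b := KL.clamp_coe _

lemma KL.coe_companion {A : Type} [Nonempty A] (d : FRel A A) (f : A → I) (b : A) :
    (companion d f b : ℝ) = ⨆ a : A, (clamp ((f a : ℝ) - (d a b : ℝ)) : ℝ) :=
  Set.Icc.coe_iSup zero_le_one

lemma KL.companion_lip_one {A : Type} (d : FRel A A)
    (htri : ∀ x y z, (d x z : ℝ) ≤ (d x y : ℝ) + (d y z : ℝ))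
    (f : A → I) (a b : A) :
    (companion d f a : ℝ) - (companion d f b : ℝ) ≤ (d a b : ℝ) := by
  haveI : Nonempty A := ⟨a⟩
  rw [sub_le_iff_le_add, KL.coe_companion]
  refine Real.iSup_le (fun a' => ?_)
    (add_nonneg (d a b).2.1 (companion d f b).2.1)
  have h1 : ((f a' : ℝ) - (d a' a : ℝ)) ≤ (d a b : ℝ) + ((f a' : ℝ) - (d a' b : ℝ)) := by
    have := htri a' a b; linarith
  calc (clamp ((f a' : ℝ) - (d a' a : ℝ)) : ℝ)
      ≤ (d a b : ℝ) + (clamp ((f a' : ℝ) - (d a' b : ℝ)) : ℝ) :=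
        KL.clamp_add_le (d a b).2.1 h1
    _ ≤ (d a b : ℝ) + (companion d f b : ℝ) := by
        refine add_le_add (le_refl _) ?_
        rw [KL.coe_companion]
        exact le_ciSup (f := fun a : A => (clamp ((f a : ℝ) - (d a b : ℝ)) : ℝ))
          (KL.bddI fun a : A => clamp ((f a : ℝ) - (d a b : ℝ))) a'

lemma KL.companion_lip {A : Type} (d : FRel A A)
    (htri : ∀ x y z, (d x z : ℝ) ≤ (d x y : ℝ) + (d y z : ℝ))
    (hsymm : ∀ x y, d x y = d y x)
    (f : A → I) (a b : A) :
    |(companion d f a : ℝ) - (companion d f b : ℝ)| ≤ (d a b : ℝ) := by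
  rw [abs_sub_le_iff]
  constructor
  · exact KL.companion_lip_one d htri f a b
  · have := KL.companion_lip_one d htri f b a; rw [hsymm b a] at this; exact this

end CompanionLemmas

/-- on pseudometrics, the Kantorovich lifting for a dual-closed set of monotone
predicate liftings agrees with the usual Kantorovich pseudometric lifting `d^{↑T}`. -/
theorem kantorovich_agrees_on_pseudometrics (T : SetFunctor)
    (Λ : Set (Σ n, PredLift T n))
    (hmono : ∀ l ∈ Λ, PredLiftMonotone T l.2)
    (hdual : ∀ l ∈ Λ, (⟨l.1, PredLift.dual l.2⟩ : Σ n, PredLift T n) ∈ Λ)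
    (A : Type) (d : FRel A A) (hd : IsPseudometric d) (t₁ t₂ : T.obj A) :
    (kantorovich T Λ d t₁ t₂ : ℝ) =
      ⨆ l : Λ, ⨆ f : {f : Fin l.1.1 → (A → I) //
          ∀ i a b, |(f i a : ℝ) - (f i b : ℝ)| ≤ (d a b : ℝ)},
        |(l.1.2.app A f.1 t₁ : ℝ) - (l.1.2.app A f.1 t₂ : ℝ)| := by
  obtain ⟨⟨hrefl, htri⟩, hsymm⟩ := hd
  set RHS := ⨆ l : Λ, ⨆ f : {f : Fin l.1.1 → (A → I) //
      ∀ i a b, |(f i a : ℝ) - (f i b : ℝ)| ≤ (d a b : ℝ)},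
    |(l.1.2.app A f.1 t₁ : ℝ) - (l.1.2.app A f.1 t₂ : ℝ)| with hRHS
  have hinner_le_one : ∀ l : Λ, (⨆ f : {f : Fin l.1.1 → (A → I) //
      ∀ i a b, |(f i a : ℝ) - (f i b : ℝ)| ≤ (d a b : ℝ)},
    |(l.1.2.app A f.1 t₁ : ℝ) - (l.1.2.app A f.1 t₂ : ℝ)|) ≤ 1 :=
    fun l => Real.iSup_le (fun f => KL.abs_sub_le_one _ _) zero_le_one
  have houter_bdd : BddAbove (Set.range (fun l : Λ =>
      ⨆ f : {f : Fin l.1.1 → (A → I) //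
        ∀ i a b, |(f i a : ℝ) - (f i b : ℝ)| ≤ (d a b : ℝ)},
      |(l.1.2.app A f.1 t₁ : ℝ) - (l.1.2.app A f.1 t₂ : ℝ)|)) :=
    ⟨1, by rintro x ⟨l, rfl⟩; exact hinner_le_one l⟩
  have hRHS_nonneg : 0 ≤ RHS :=
    Real.iSup_nonneg fun l => Real.iSup_nonneg fun f => abs_nonneg _
  have hRHS_le_one : RHS ≤ 1 := Real.iSup_le hinner_le_one zero_le_one
  -- every term of the RHS family is below RHS
  have hle : ∀ (l : Λ) (F : Fin l.1.1 → (A → I))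
      (hF : ∀ i a b, |(F i a : ℝ) - (F i b : ℝ)| ≤ (d a b : ℝ)),
      |(l.1.2.app A F t₁ : ℝ) - (l.1.2.app A F t₂ : ℝ)| ≤ RHS := by
    intro l F hF
    have hb : BddAbove (Set.range (fun f : {f : Fin l.1.1 → (A → I) //
        ∀ i a b, |(f i a : ℝ) - (f i b : ℝ)| ≤ (d a b : ℝ)} =>
      |(l.1.2.app A f.1 t₁ : ℝ) - (l.1.2.app A f.1 t₂ : ℝ)|)) :=
      ⟨1, by rintro x ⟨f, rfl⟩; exact KL.abs_sub_le_one _ _⟩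
    rw [hRHS]
    exact (le_ciSup hb ⟨F, hF⟩).trans (le_ciSup houter_bdd l)
  apply le_antisymm
  · -- LHS ≤ RHS
    have h1 : kantorovich T Λ d t₁ t₂ ≤ clamp RHS := by
      refine iSup_le fun l => iSup_le fun fg => ?_
      obtain ⟨⟨f, g⟩, hfg⟩ := fg
      refine KL.clamp_mono ?_
      have hFle : ∀ i, companion d (f i) ≤ g i :=
        fun i => KL.companion_le d (f i) (g i) (hfg i)
      have hFge : ∀ i, f i ≤ companion d (f i) :=
        fun i a => KL.companion_ge d hrefl (f i) a
      have hFlip : ∀ i a b,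
          |(companion d (f i) a : ℝ) - (companion d (f i) b : ℝ)| ≤ (d a b : ℝ) :=
        fun i a b => KL.companion_lip d htri hsymm (f i) a b
      have h1 : l.1.2.app A f t₁ ≤ l.1.2.app A (fun i => companion d (f i)) t₁ :=
        hmono l.1 l.2 A f _ hFge t₁
      have h2 : l.1.2.app A (fun i => companion d (f i)) t₂ ≤ l.1.2.app A g t₂ :=
        hmono l.1 l.2 A _ g hFle t₂
      have h3 := hle l (fun i => companion d (f i)) hFlip
      have h4 := le_abs_self ((l.1.2.app A (fun i => companion d (f i)) t₁ : ℝ)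
        - (l.1.2.app A (fun i => companion d (f i)) t₂ : ℝ))
      have c1 := Subtype.coe_le_coe.mpr h1
      have c2 := Subtype.coe_le_coe.mpr h2
      linarith
    calc (kantorovich T Λ d t₁ t₂ : ℝ) ≤ (clamp RHS : ℝ) := Subtype.coe_le_coe.mpr h1
      _ = RHS := by
          rw [KL.coe_clamp, min_eq_right hRHS_le_one, max_eq_right hRHS_nonneg]
  · -- RHS ≤ LHS
    refine Real.iSup_le (fun l => Real.iSup_le (fun fh => ?_)
        (kantorovich T Λ d t₁ t₂).2.1) (kantorovich T Λ d t₁ t₂).2.1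
    obtain ⟨f, hf⟩ := fh
    rcases le_total (l.1.2.app A f t₂ : ℝ) (l.1.2.app A f t₁ : ℝ) with hc | hc
    · rw [abs_of_nonneg (by linarith)]
      have hpair : ∀ i, RNonexp d (f i) (f i) :=
        fun i a b => (le_abs_self _).trans (hf i a b)
      have hterm : clamp ((l.1.2.app A f t₁ : ℝ) - (l.1.2.app A f t₂ : ℝ)) ≤
          kantorovich T Λ d t₁ t₂ := by
        have h1 := le_iSup (fun fg : {fg : (Fin l.1.1 → (A → I)) × (Fin l.1.1 → (A → I)) //
            ∀ i, RNonexp d (fg.1 i) (fg.2 i)} =>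
          clamp ((l.1.2.app A fg.1.1 t₁ : ℝ) - (l.1.2.app A fg.1.2 t₂ : ℝ))) ⟨(f, f), hpair⟩
        exact h1.trans (le_iSup (fun l : Λ =>
          ⨆ fg : {fg : (Fin l.1.1 → (A → I)) × (Fin l.1.1 → (A → I)) //
            ∀ i, RNonexp d (fg.1 i) (fg.2 i)},
          clamp ((l.1.2.app A fg.1.1 t₁ : ℝ) - (l.1.2.app A fg.1.2 t₂ : ℝ))) l)
      have hb : (l.1.2.app A f t₁ : ℝ) - (l.1.2.app A f t₂ : ℝ) ≤ 1 :=
        (le_abs_self _).trans (KL.abs_sub_le_one _ _)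
      exact (KL.le_clamp hb).trans (Subtype.coe_le_coe.mpr hterm)
    · rw [abs_of_nonpos (by linarith), neg_sub]
      -- use the dual lifting
      have hl' : (⟨l.1.1, PredLift.dual l.1.2⟩ : Σ n, PredLift T n) ∈ Λ := hdual l.1 l.2
      set l' : Λ := ⟨⟨l.1.1, PredLift.dual l.1.2⟩, hl'⟩ with hl'def
      set f' : Fin l.1.1 → (A → I) := fun i a => unitInterval.symm (f i a) with hf'def
      have hdapp : ∀ t, (PredLift.dual l.1.2).app A f' t =
          unitInterval.symm (l.1.2.app A f t) := by
        intro t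
        show unitInterval.symm (l.1.2.app A (fun i x => unitInterval.symm (f' i x)) t) =
          unitInterval.symm (l.1.2.app A f t)
        have he : (fun i x => unitInterval.symm (f' i x)) = f := by
          funext i x; exact unitInterval.symm_symm (f i x)
        rw [he]
      have hf' : ∀ i a b, |(f' i a : ℝ) - (f' i b : ℝ)| ≤ (d a b : ℝ) := by
        intro i a b
        have he : (f' i a : ℝ) - (f' i b : ℝ) = (f i b : ℝ) - (f i a : ℝ) := by
          simp only [hf'def, unitInterval.coe_symm_eq]; ring
        rw [he, abs_sub_comm]
        exact hf i a b
      have hpair : ∀ i, RNonexp d (f' i) (f' i) :=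
        fun i a b => (le_abs_self _).trans (hf' i a b)
      have hterm : clamp (((PredLift.dual l.1.2).app A f' t₁ : ℝ)
          - ((PredLift.dual l.1.2).app A f' t₂ : ℝ)) ≤ kantorovich T Λ d t₁ t₂ := by
        have h1 := le_iSup (fun fg : {fg : (Fin l'.1.1 → (A → I)) × (Fin l'.1.1 → (A → I)) //
            ∀ i, RNonexp d (fg.1 i) (fg.2 i)} =>
          clamp ((l'.1.2.app A fg.1.1 t₁ : ℝ) - (l'.1.2.app A fg.1.2 t₂ : ℝ)))
          ⟨(f', f'), hpair⟩
        exact h1.trans (le_iSup (fun l : Λ =>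
          ⨆ fg : {fg : (Fin l.1.1 → (A → I)) × (Fin l.1.1 → (A → I)) //
            ∀ i, RNonexp d (fg.1 i) (fg.2 i)},
          clamp ((l.1.2.app A fg.1.1 t₁ : ℝ) - (l.1.2.app A fg.1.2 t₂ : ℝ))) l')
      have heq : ((PredLift.dual l.1.2).app A f' t₁ : ℝ)
          - ((PredLift.dual l.1.2).app A f' t₂ : ℝ)
          = (l.1.2.app A f t₂ : ℝ) - (l.1.2.app A f t₁ : ℝ) := by
        rw [hdapp t₁, hdapp t₂, unitInterval.coe_symm_eq, unitInterval.coe_symm_eq]; ring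
      rw [heq] at hterm
      have hb : (l.1.2.app A f t₂ : ℝ) - (l.1.2.app A f t₁ : ℝ) ≤ 1 :=
        (le_abs_self _).trans (KL.abs_sub_le_one _ _)
      exact (KL.le_clamp hb).trans (Subtype.coe_le_coe.mpr hterm)
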